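/- For a finite point set P with distinct x- and y-coordinates of size m, zRects(P) ≥ Funnel(P)/2 − 2m. In particular, for each p ∈ P, the number of z-rectangles with top point p is at least ⌊f(P,p)/2⌋ − 1. -/

import Mathlib

/-- Number of maximal blocks of equal symbols in a string over `{L,R}` (as `Bool`s). -/
def blocks : List Bool → ℕ
  | [] => 0
  | [_] => 1
  | a :: b :: l => (if a = b then 0 else 1) + blocks (b :: l)

/-- The labeled merge of two finite sets of reals: sort `L ∪ R` increasingly and
label each element by whether it came from `L` (`true`) or not. -/
noncomputable def mix (L R : Finset ℝ) : List Bool :=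
  ((L ∪ R).sort (· ≤ ·)).map (fun x => decide (x ∈ L))

/-- `mixValue L R` is the number of maximal same-origin blocks in the merged sorted sequence. -/
noncomputable def mixValue (L R : Finset ℝ) : ℕ := blocks (mix L R)
/-- Membership in the minimal axis-aligned rectangle spanned by `p` and `q`. -/
def inRect (p q t : ℝ × ℝ) : Prop :=
  min p.1 q.1 ≤ t.1 ∧ t.1 ≤ max p.1 q.1 ∧ min p.2 q.2 ≤ t.2 ∧ t.2 ≤ max p.2 q.2

noncomputable instance (p q t : ℝ × ℝ) : Decidable (inRect p q t) := by
  unfold inRect; infer_instance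

/-- The left funnel of `p` within `P`. -/
noncomputable def FL (P : Finset (ℝ × ℝ)) (p : ℝ × ℝ) : Finset (ℝ × ℝ) :=
  P.filter (fun q => q.2 < p.2 ∧ q.1 < p.1 ∧ ∀ t ∈ P, inRect p q t → t = p ∨ t = q)

/-- The right funnel of `p` within `P`. -/
noncomputable def FR (P : Finset (ℝ × ℝ)) (p : ℝ × ℝ) : Finset (ℝ × ℝ) :=
  P.filter (fun q => q.2 < p.2 ∧ q.1 > p.1 ∧ ∀ t ∈ P, inRect p q t → t = p ∨ t = q)

/-- The funnel contribution `f(P,p)`. -/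
noncomputable def fContrib (P : Finset (ℝ × ℝ)) (p : ℝ × ℝ) : ℕ :=
  mixValue ((FL P p).image Prod.snd) ((FR P p).image Prod.snd)

/-- Wilber's Funnel bound. -/
noncomputable def Funnel (P : Finset (ℝ × ℝ)) : ℕ := ∑ p ∈ P, fContrib P p

/-- All points of `P` have distinct `y`-coordinates. -/
def DistinctY (P : Finset (ℝ × ℝ)) : Prop :=
  ∀ p ∈ P, ∀ q ∈ P, p.2 = q.2 → p = q

/-- All points of `P` have distinct `x`-coordinates. -/
def DistinctX (P : Finset (ℝ × ℝ)) : Prop :=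
  ∀ p ∈ P, ∀ q ∈ P, p.1 = q.1 → p = q
/-- `(p,q,r,s)` is a z-rectangle of `P`. -/
def IsZRect (P : Finset (ℝ × ℝ)) (p q r s : ℝ × ℝ) : Prop :=
  p ∈ P ∧ q ∈ P ∧ r ∈ P ∧ s ∈ P ∧
  q.1 < p.1 ∧ p.1 < r.1 ∧ r.1 < s.1 ∧
  r.2 < q.2 ∧ q.2 < s.2 ∧ s.2 < p.2 ∧
  ∀ t ∈ P, q.1 ≤ t.1 → t.1 ≤ s.1 → r.2 ≤ t.2 → t.2 ≤ p.2 →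
    (t = p ∨ t = q ∨ t = r ∨ t = s)

noncomputable instance (P : Finset (ℝ × ℝ)) (p q r s : ℝ × ℝ) : Decidable (IsZRect P p q r s) := by
  unfold IsZRect; infer_instance

/-- The number of z-rectangles of `P`. -/
noncomputable def zRects (P : Finset (ℝ × ℝ)) : ℕ :=
  ((P ×ˢ P ×ˢ P ×ˢ P).filter
    (fun t => IsZRect P t.1 t.2.1 t.2.2.1 t.2.2.2)).card

/-- The number of z-rectangles of `P` whose top point is `p`. -/
noncomputable def zRectsTop (P : Finset (ℝ × ℝ)) (p : ℝ × ℝ) : ℕ :=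
  ((P ×ˢ P ×ˢ P).filter (fun t => IsZRect P p t.1 t.2.1 t.2.2)).card

def Qpred (b : List Bool) (i : ℕ) : Prop :=
  b.getD i true = false ∧ b.getD (i+1) false = true ∧ false ∈ b.drop (i+2)

instance (b : List Bool) (i : ℕ) : Decidable (Qpred b i) := by
  unfold Qpred; infer_instance

noncomputable def cnt (b : List Bool) : ℕ :=
  ((Finset.range b.length).filter (Qpred b)).card

lemma Qpred_cons_succ (a : Bool) (b : List Bool) (i : ℕ) :
    Qpred (a :: b) (i+1) ↔ Qpred b i := by
  simp [Qpred]

lemma cnt_eq_sum (b : List Bool) :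
    cnt b = ∑ i ∈ Finset.range b.length, if Qpred b i then 1 else 0 := by
  rw [cnt, Finset.card_filter]

lemma cnt_cons (a : Bool) (b : List Bool) :
    cnt (a :: b) = cnt b + (if Qpred (a :: b) 0 then 1 else 0) := by
  rw [cnt_eq_sum, cnt_eq_sum]
  simp only [List.length_cons]
  rw [Finset.sum_range_succ']
  simp only [Qpred_cons_succ]

lemma blocks_all_eq (a : Bool) (l : List Bool) (h : ∀ x ∈ l, x = a) :
    blocks (a :: l) = 1 := by
  induction l with
  | nil => rfl
  | cons c l ih =>
    have hc : c = a := h c (by simp)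
    subst hc
    have := ih (fun x hx => h x (by simp [hx]))
    simp [blocks, this]

lemma blocks_le (b : List Bool) :
    blocks b ≤ 2 * cnt b + 2 + (if b.head? = some true then 1 else 0) := by
  match b with
  | [] => simp [blocks]
  | [a] => simp [blocks]; omega
  | a :: c :: l =>
    have ih := blocks_le (c :: l)
    have hc := cnt_cons a (c :: l)
    have hbl : blocks (a :: c :: l) = (if a = c then 0 else 1) + blocks (c :: l) := rfl
    match a, c with
    | true, true =>
      norm_num at hbl ih ⊢
      omega
    | false, false =>
      norm_num at hbl ih ⊢
      omega
    | true, false =>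
      norm_num at hbl ih ⊢
      omega
    | false, true =>
      norm_num at hbl ih ⊢
      by_cases hf : false ∈ l
      · have hQ : Qpred (false :: true :: l) 0 := by
          simp [Qpred, hf]
        rw [if_pos hQ] at hc
        omega
      · have hall : ∀ x ∈ l, x = true := by
          intro x hx; cases x
          · exact absurd hx hf
          · rfl
        have hb1 : blocks (true :: l) = 1 := blocks_all_eq true l hall
        omega

lemma blocks_le' (b : List Bool) : blocks b ≤ 2 * cnt b + 3 := by
  have := blocks_le b
  split at this <;> omega

lemma mem_FL {P : Finset (ℝ × ℝ)} {p q : ℝ × ℝ} :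
    q ∈ FL P p ↔ q ∈ P ∧ q.2 < p.2 ∧ q.1 < p.1 ∧ ∀ t ∈ P, inRect p q t → t = p ∨ t = q := by
  simp [FL, Finset.mem_filter]

lemma mem_FR {P : Finset (ℝ × ℝ)} {p q : ℝ × ℝ} :
    q ∈ FR P p ↔ q ∈ P ∧ q.2 < p.2 ∧ q.1 > p.1 ∧ ∀ t ∈ P, inRect p q t → t = p ∨ t = q := by
  simp [FR, Finset.mem_filter]

lemma left_mono {P : Finset (ℝ × ℝ)} {p a a' : ℝ × ℝ} (hY : DistinctY P) (hp : p ∈ P)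
    (ha : a ∈ FL P p) (ha' : a' ∈ FL P p) (hlt : a.2 < a'.2) : a'.1 < a.1 := by
  obtain ⟨haP, hay, hax, haf⟩ := mem_FL.mp ha
  obtain ⟨ha'P, ha'y, ha'x, _⟩ := mem_FL.mp ha'
  by_contra h
  push_neg at h
  have hin : inRect p a a' :=
    ⟨le_trans (min_le_right _ _) h, le_trans ha'x.le (le_max_left _ _),
     le_trans (min_le_right _ _) hlt.le, le_trans ha'y.le (le_max_left _ _)⟩
  rcases haf a' ha'P hin with h1 | h2
  · exact absurd (h1 ▸ ha'x) (lt_irrefl _)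
  · exact absurd (h2 ▸ hlt) (lt_irrefl _)

lemma right_mono {P : Finset (ℝ × ℝ)} {p a a' : ℝ × ℝ} (hY : DistinctY P) (hp : p ∈ P)
    (ha : a ∈ FR P p) (ha' : a' ∈ FR P p) (hlt : a.2 < a'.2) : a.1 < a'.1 := by
  obtain ⟨haP, hay, hax, haf⟩ := mem_FR.mp ha
  obtain ⟨ha'P, ha'y, ha'x, _⟩ := mem_FR.mp ha'
  by_contra h
  push_neg at h
  have hin : inRect p a a' :=
    ⟨le_trans (min_le_left _ _) ha'x.le, le_trans h (le_max_right _ _),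
     le_trans (min_le_right _ _) hlt.le, le_trans ha'y.le (le_max_left _ _)⟩
  rcases haf a' ha'P hin with h1 | h2
  · exact absurd (h1 ▸ ha'x) (lt_irrefl _)
  · exact absurd (h2 ▸ hlt) (lt_irrefl _)

lemma hit_left {P : Finset (ℝ × ℝ)} {p t : ℝ × ℝ} (hX : DistinctX P) (hY : DistinctY P)
    (hp : p ∈ P) (ht : t ∈ P) (htx : t.1 < p.1) (hty : t.2 < p.2) :
    ∃ u ∈ FL P p, t.1 ≤ u.1 ∧ t.2 ≤ u.2 := by
  classical
  set T := P.filter (fun u => inRect p t u ∧ u ≠ p) with hT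
  have htT : t ∈ T := by
    refine Finset.mem_filter.mpr ⟨ht, ⟨min_le_right _ _, le_max_right _ _,
      min_le_right _ _, le_max_right _ _⟩, fun h => absurd (h ▸ hty) (lt_irrefl _)⟩
  obtain ⟨u, huT, humax⟩ := T.exists_max_image Prod.snd ⟨t, htT⟩
  obtain ⟨huP, ⟨hu1, hu2, hu3, hu4⟩, hune⟩ := Finset.mem_filter.mp huT
  rw [min_eq_right htx.le] at hu1
  rw [max_eq_left htx.le] at hu2
  rw [min_eq_right hty.le] at hu3
  rw [max_eq_left hty.le] at hu4
  have hux : u.1 < p.1 := lt_of_le_of_ne hu2 (fun h => hune (hX u huP p hp h))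
  have huy : u.2 < p.2 := lt_of_le_of_ne hu4 (fun h => hune (hY u huP p hp h))
  refine ⟨u, mem_FL.mpr ⟨huP, huy, hux, ?_⟩, hu1, hu3⟩
  intro v hv hvin
  by_cases hvp : v = p
  · exact Or.inl hvp
  obtain ⟨hv1, hv2, hv3, hv4⟩ := hvin
  rw [min_eq_right hux.le] at hv1
  rw [max_eq_left hux.le] at hv2
  rw [min_eq_right huy.le] at hv3
  rw [max_eq_left huy.le] at hv4
  have hvT : v ∈ T := by
    refine Finset.mem_filter.mpr ⟨hv, ⟨?_, ?_, ?_, ?_⟩, hvp⟩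
    · rw [min_eq_right htx.le]; exact le_trans hu1 hv1
    · rw [max_eq_left htx.le]; exact hv2
    · rw [min_eq_right hty.le]; exact le_trans hu3 hv3
    · rw [max_eq_left hty.le]; exact hv4
  have h1 : v.2 ≤ u.2 := humax v hvT
  exact Or.inr (hY v hv u huP (le_antisymm h1 hv3))

lemma hit_right {P : Finset (ℝ × ℝ)} {p t : ℝ × ℝ} (hX : DistinctX P) (hY : DistinctY P)
    (hp : p ∈ P) (ht : t ∈ P) (htx : p.1 < t.1) (hty : t.2 < p.2) :
    ∃ u ∈ FR P p, u.1 ≤ t.1 ∧ t.2 ≤ u.2 := by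
  classical
  set T := P.filter (fun u => inRect p t u ∧ u ≠ p) with hT
  have htT : t ∈ T := by
    refine Finset.mem_filter.mpr ⟨ht, ⟨min_le_right _ _, le_max_right _ _,
      min_le_right _ _, le_max_right _ _⟩, fun h => absurd (h ▸ hty) (lt_irrefl _)⟩
  obtain ⟨u, huT, humax⟩ := T.exists_max_image Prod.snd ⟨t, htT⟩
  obtain ⟨huP, ⟨hu1, hu2, hu3, hu4⟩, hune⟩ := Finset.mem_filter.mp huT
  rw [min_eq_left htx.le] at hu1
  rw [max_eq_right htx.le] at hu2
  rw [min_eq_right hty.le] at hu3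
  rw [max_eq_left hty.le] at hu4
  have hux : p.1 < u.1 := lt_of_le_of_ne hu1 (fun h => hune (hX u huP p hp h.symm))
  have huy : u.2 < p.2 := lt_of_le_of_ne hu4 (fun h => hune (hY u huP p hp h))
  refine ⟨u, mem_FR.mpr ⟨huP, huy, hux, ?_⟩, hu2, hu3⟩
  intro v hv hvin
  by_cases hvp : v = p
  · exact Or.inl hvp
  obtain ⟨hv1, hv2, hv3, hv4⟩ := hvin
  rw [min_eq_left hux.le] at hv1
  rw [max_eq_right hux.le] at hv2
  rw [min_eq_right huy.le] at hv3
  rw [max_eq_left huy.le] at hv4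
  have hvT : v ∈ T := by
    refine Finset.mem_filter.mpr ⟨hv, ⟨?_, ?_, ?_, ?_⟩, hvp⟩
    · rw [min_eq_left htx.le]; exact hv1
    · rw [max_eq_right htx.le]; exact le_trans hv2 hu2
    · rw [min_eq_right hty.le]; exact le_trans hu3 hv3
    · rw [max_eq_left hty.le]; exact hv4
  have h1 : v.2 ≤ u.2 := humax v hvT
  exact Or.inr (hY v hv u huP (le_antisymm h1 hv3))

lemma zrect_construct {P : Finset (ℝ × ℝ)} {p q r s : ℝ × ℝ}
    (hX : DistinctX P) (hY : DistinctY P) (hp : p ∈ P)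
    (hq : q ∈ FL P p) (hr : r ∈ FR P p) (hs : s ∈ FR P p)
    (hrq : r.2 < q.2) (hqs : q.2 < s.2)
    (hL : ∀ u ∈ FL P p, r.2 < u.2 → u.2 < q.2 → False)
    (hR : ∀ u ∈ FR P p, r.2 < u.2 → u.2 < s.2 → False) :
    IsZRect P p q r s := by
  obtain ⟨hqP, hqy, hqx, hqf⟩ := mem_FL.mp hq
  obtain ⟨hrP, hry, hrx, hrf⟩ := mem_FR.mp hr
  obtain ⟨hsP, hsy, hsx, hsf⟩ := mem_FR.mp hs
  refine ⟨hp, hqP, hrP, hsP, hqx, hrx, right_mono hY hp hr hs (hrq.trans hqs), hrq, hqs, hsy, ?_⟩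
  intro t htP ht1 ht2 ht3 ht4
  by_cases htp : t = p
  · exact Or.inl htp
  have htyp : t.2 < p.2 := lt_of_le_of_ne ht4 (fun h => htp (hY t htP p hp h))
  rcases lt_trichotomy t.1 p.1 with hx | hx | hx
  · -- t left of p
    obtain ⟨u, huF, htu1, htu2⟩ := hit_left hX hY hp htP hx htyp
    obtain ⟨huP, huy, hux, _⟩ := mem_FL.mp huF
    have hur : r.2 ≤ u.2 := le_trans ht3 htu2
    rcases lt_trichotomy u.2 q.2 with h1 | h1 | h1
    · rcases eq_or_lt_of_le hur with h2 | h2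
      · have huR : u = r := hY u huP r hrP h2.symm
        rw [huR] at hux
        exact absurd (hux.trans hrx) (lt_irrefl _)
      · exact absurd (hL u huF h2 h1) id
    · have huq : u = q := hY u huP q hqP h1
      rw [huq] at htu1
      exact Or.inr (Or.inl (hX t htP q hqP (le_antisymm htu1 ht1)))
    · have h2 := left_mono hY hp hq huF h1
      have h3 : q.1 ≤ u.1 := le_trans ht1 htu1
      exact absurd (lt_of_le_of_lt h3 h2) (lt_irrefl _)
  · exact absurd (hX t htP p hp hx) htp
  · -- t right of p
    obtain ⟨u, huF, htu1, htu2⟩ := hit_right hX hY hp htP hx htyp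
    obtain ⟨huP, huy, hux, _⟩ := mem_FR.mp huF
    have hur : r.2 ≤ u.2 := le_trans ht3 htu2
    rcases eq_or_lt_of_le hur with h2 | h2
    · have huR : u = r := hY u huP r hrP h2.symm
      rw [huR] at htu2
      exact Or.inr (Or.inr (Or.inl (hY t htP r hrP (le_antisymm htu2 ht3))))
    · rcases lt_trichotomy u.2 s.2 with h3 | h3 | h3
      · exact absurd (hR u huF h2 h3) id
      · have hus : u = s := hY u huP s hsP h3
        rw [hus] at htu1
        exact Or.inr (Or.inr (Or.inr (hX t htP s hsP (le_antisymm ht2 htu1))))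
      · have h4 := right_mono hY hp hs huF h3
        have h5 : u.1 ≤ s.1 := le_trans htu1 ht2
        exact absurd (lt_of_le_of_lt h5 h4) (lt_irrefl _)

noncomputable def pick (A : Finset (ℝ × ℝ)) (y : ℝ) : ℝ × ℝ :=
  if h : ∃ q ∈ A, q.2 = y then h.choose else 0

lemma pick_spec {A : Finset (ℝ × ℝ)} {y : ℝ} (h : y ∈ A.image Prod.snd) :
    pick A y ∈ A ∧ (pick A y).2 = y := by
  obtain ⟨q, hq, hqy⟩ := Finset.mem_image.mp h
  have hex : ∃ q ∈ A, q.2 = y := ⟨q, hq, hqy⟩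
  rw [pick, dif_pos hex]
  exact ⟨hex.choose_spec.1, hex.choose_spec.2⟩

open Classical in
noncomputable def jdx (b : List Bool) (i : ℕ) : ℕ :=
  if h : ∃ j, i + 1 < j ∧ b.getD j true = false then Nat.find h else 0

lemma jdx_spec {b : List Bool} {i : ℕ} (h : ∃ j, i + 1 < j ∧ b.getD j true = false) :
    i + 1 < jdx b i ∧ b.getD (jdx b i) true = false ∧
      ∀ k, i + 1 < k → k < jdx b i → b.getD k true = true := by
  rw [jdx, dif_pos h]
  refine ⟨(Nat.find_spec h).1, (Nat.find_spec h).2, ?_⟩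
  intro k hk1 hk2
  by_contra hc
  exact Nat.find_min h hk2 ⟨hk1, by simpa using hc⟩

lemma cnt_le_zRectsTop (P : Finset (ℝ × ℝ)) (hX : DistinctX P) (hY : DistinctY P)
    (p : ℝ × ℝ) (hp : p ∈ P) :
    cnt (mix ((FL P p).image Prod.snd) ((FR P p).image Prod.snd)) ≤ zRectsTop P p := by
  classical
  set Lp := FL P p with hLpdef
  set Rp := FR P p with hRpdef
  have hLsub : Lp ⊆ P := Finset.filter_subset _ _
  have hRsub : Rp ⊆ P := Finset.filter_subset _ _
  set Ly := Lp.image Prod.snd with hLydef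
  set Ry := Rp.image Prod.snd with hRydef
  set l : List ℝ := (Ly ∪ Ry).sort (· ≤ ·) with hldef
  set b : List Bool := l.map (fun x => decide (x ∈ Ly)) with hbdef
  have hmixb : mix Ly Ry = b := rfl
  have hlen : b.length = l.length := by rw [hbdef]; exact List.length_map _
  have hsort : List.Pairwise (· ≤ ·) l := Finset.pairwise_sort _ _
  have hnd : l.Nodup := Finset.sort_nodup _ _
  have hmono : ∀ i j (hi : i < l.length) (hj : j < l.length), i < j → l[i] < l[j] := by
    intro i j hi hj hij
    refine lt_of_le_of_ne (List.pairwise_iff_getElem.mp hsort i j hi hj hij) ?_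
    intro h
    exact absurd (hnd.getElem_inj_iff.mp h) (Nat.ne_of_lt hij)
  have hmono' : ∀ i j (hi : i < l.length) (hj : j < l.length), l[i] < l[j] → i < j := by
    intro i j hi hj hlt
    by_contra h
    push_neg at h
    rcases lt_or_eq_of_le h with h2 | h2
    · exact absurd (hmono j i hj hi h2) (lt_asymm hlt)
    · subst h2; exact absurd hlt (lt_irrefl _)
  have hmeml : ∀ y : ℝ, y ∈ l ↔ y ∈ Ly ∨ y ∈ Ry := by
    intro y
    rw [hldef, Finset.mem_sort]
    exact Finset.mem_union
  have hdisj : ∀ y, y ∈ Ly → y ∈ Ry → False := by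
    intro y hL hR
    obtain ⟨u, hu, huy⟩ := Finset.mem_image.mp hL
    obtain ⟨v, hv, hvy⟩ := Finset.mem_image.mp hR
    have huv : u = v := hY u (hLsub hu) v (hRsub hv) (by rw [huy, hvy])
    have h1 := (mem_FL.mp hu).2.2.1
    have h2 := (mem_FR.mp hv).2.2.1
    rw [huv] at h1
    exact absurd (h1.trans h2) (lt_irrefl _)
  have hlab : ∀ (k : ℕ) (hk : k < l.length) (d : Bool), b.getD k d = decide (l[k] ∈ Ly) := by
    intro k hk d
    rw [List.getD_eq_getElem b d (by rw [hlen]; exact hk)]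
    simp only [hbdef, List.getElem_map]
  have hi1len : ∀ i, Qpred b i → i + 1 < l.length := by
    intro i hQ
    obtain ⟨hQ1, hQ2, hQ3⟩ := hQ
    by_contra hcon
    push_neg at hcon
    rw [List.getD_eq_default b false (n := i + 1) (by omega)] at hQ2
    exact Bool.false_ne_true hQ2
  have hjexists : ∀ i, Qpred b i → ∃ j, i + 1 < j ∧ b.getD j true = false := by
    intro i hQ
    obtain ⟨k, hk, hkf⟩ := List.mem_iff_getElem.mp hQ.2.2
    have hkl : i + 2 + k < b.length := by
      rw [List.length_drop] at hk
      omega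
    refine ⟨i + 2 + k, by omega, ?_⟩
    rw [List.getD_eq_getElem b true hkl]
    rw [List.getElem_drop] at hkf
    exact hkf
  rw [hmixb]
  unfold cnt
  rw [zRectsTop]
  apply Finset.card_le_card_of_injOn
    (fun i => (pick Lp (l.getD (i+1) 0), pick Rp (l.getD i 0), pick Rp (l.getD (jdx b i) 0)))
  · -- maps into z-rectangles
    intro i hiS
    obtain ⟨hir, hQ⟩ := Finset.mem_filter.mp hiS
    obtain ⟨hQ1, hQ2, hQ3⟩ := hQ
    have hib : i < b.length := Finset.mem_range.mp hir
    have hil : i < l.length := hlen ▸ hib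
    have hi1 : i + 1 < l.length := hi1len i ⟨hQ1, hQ2, hQ3⟩
    obtain ⟨hj1, hj2, hj3⟩ := jdx_spec (hjexists i ⟨hQ1, hQ2, hQ3⟩)
    set j := jdx b i with hjdef
    have hjb : j < b.length := by
      by_contra hcon
      push_neg at hcon
      rw [List.getD_eq_default b true (n := j) hcon] at hj2
      exact absurd hj2 (by simp)
    have hjl : j < l.length := hlen ▸ hjb
    have hyi : l[i] ∈ Ry := by
      have h1 := hlab i hil true
      rw [hQ1] at h1
      have h2 : l[i] ∉ Ly := by simpa using h1.symm
      rcases (hmeml _).mp (List.getElem_mem hil) with h | h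
      · exact absurd h h2
      · exact h
    have hyi1 : l[i+1] ∈ Ly := by
      have h1 := hlab (i+1) hi1 false
      rw [hQ2] at h1
      simpa using h1.symm
    have hyj : l[j] ∈ Ry := by
      have h1 := hlab j hjl true
      rw [hj2] at h1
      have h2 : l[j] ∉ Ly := by simpa using h1.symm
      rcases (hmeml _).mp (List.getElem_mem hjl) with h | h
      · exact absurd h h2
      · exact h
    have hgd0 : l.getD i 0 = l[i] := List.getD_eq_getElem l 0 hil
    have hgd1 : l.getD (i+1) 0 = l[i+1] := List.getD_eq_getElem l 0 hi1
    have hgdj : l.getD j 0 = l[j] := List.getD_eq_getElem l 0 hjl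
    obtain ⟨hqF, hq2⟩ := pick_spec (A := Lp) (y := l.getD (i+1) 0) (by rw [hgd1]; exact hyi1)
    obtain ⟨hrF, hr2⟩ := pick_spec (A := Rp) (y := l.getD i 0) (by rw [hgd0]; exact hyi)
    obtain ⟨hsF, hs2⟩ := pick_spec (A := Rp) (y := l.getD j 0) (by rw [hgdj]; exact hyj)
    set q := pick Lp (l.getD (i+1) 0)
    set r := pick Rp (l.getD i 0)
    set s := pick Rp (l.getD j 0)
    rw [hgd1] at hq2
    rw [hgd0] at hr2
    rw [hgdj] at hs2
    have hrq : r.2 < q.2 := by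
      rw [hr2, hq2]; exact hmono i (i+1) hil hi1 (by omega)
    have hqs : q.2 < s.2 := by
      rw [hq2, hs2]; exact hmono (i+1) j hi1 hjl hj1
    have hL : ∀ u ∈ Lp, r.2 < u.2 → u.2 < q.2 → False := by
      intro u hu h1 h2
      have hul : u.2 ∈ l := (hmeml _).mpr (Or.inl (Finset.mem_image_of_mem Prod.snd hu))
      obtain ⟨k, hkl2, hke⟩ := List.mem_iff_getElem.mp hul
      rw [hr2, ← hke] at h1
      rw [hq2, ← hke] at h2
      have ha := hmono' i k hil hkl2 h1
      have hb2 := hmono' k (i+1) hkl2 hi1 h2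
      omega
    have hR : ∀ u ∈ Rp, r.2 < u.2 → u.2 < s.2 → False := by
      intro u hu h1 h2
      have huRy : u.2 ∈ Ry := Finset.mem_image_of_mem Prod.snd hu
      have hul : u.2 ∈ l := (hmeml _).mpr (Or.inr huRy)
      obtain ⟨k, hkl2, hke⟩ := List.mem_iff_getElem.mp hul
      rw [hr2, ← hke] at h1
      rw [hs2, ← hke] at h2
      have ha := hmono' i k hil hkl2 h1
      have hb2 := hmono' k j hkl2 hjl h2
      have hkLy : l[k] ∈ Ly := by
        rcases Nat.lt_or_ge k (i+2) with hc | hc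
        · have : k = i + 1 := by omega
          subst this
          exact hyi1
        · have h3 := hj3 k (by omega) hb2
          have h4 := hlab k hkl2 true
          rw [h3] at h4
          simpa using h4.symm
      rw [hke] at hkLy
      exact hdisj u.2 hkLy huRy
    have hzr : IsZRect P p q r s := zrect_construct hX hY hp hqF hrF hsF hrq hqs hL hR
    simp only [Finset.mem_coe, Finset.mem_filter, Finset.mem_product]
    exact ⟨⟨hLsub hqF, hRsub hrF, hRsub hsF⟩, hzr⟩
  · -- injectivity
    intro i hi i' hi' heq
    have hQi : Qpred b i := (Finset.mem_filter.mp hi).2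
    have hQi' : Qpred b i' := (Finset.mem_filter.mp hi').2
    have h1 : i + 1 < l.length := hi1len i hQi
    have h1' : i' + 1 < l.length := hi1len i' hQi'
    have hgd1 : l.getD (i+1) 0 = l[i+1] := List.getD_eq_getElem l 0 h1
    have hgd1' : l.getD (i'+1) 0 = l[i'+1] := List.getD_eq_getElem l 0 h1'
    have hyi1 : l[i+1] ∈ Ly := by
      have hh := hlab (i+1) h1 false
      rw [hQi.2.1] at hh
      simpa using hh.symm
    have hyi1' : l[i'+1] ∈ Ly := by
      have hh := hlab (i'+1) h1' false
      rw [hQi'.2.1] at hh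
      simpa using hh.symm
    obtain ⟨_, hq2⟩ := pick_spec (A := Lp) (y := l.getD (i+1) 0) (by rw [hgd1]; exact hyi1)
    obtain ⟨_, hq2'⟩ := pick_spec (A := Lp) (y := l.getD (i'+1) 0) (by rw [hgd1']; exact hyi1')
    have hfst : (pick Lp (l.getD (i+1) 0)).2 = (pick Lp (l.getD (i'+1) 0)).2 := by
      have := congrArg (fun t : (ℝ × ℝ) × (ℝ × ℝ) × (ℝ × ℝ) => t.1.2) heq
      simpa using this
    rw [hq2, hq2', hgd1, hgd1'] at hfst
    have := hnd.getElem_inj_iff.mp hfst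
    omega

lemma sum_zRectsTop_le (P : Finset (ℝ × ℝ)) :
    ∑ p ∈ P, zRectsTop P p ≤ zRects P := by
  classical
  rw [zRects]
  rw [Finset.card_eq_sum_card_fiberwise
    (f := Prod.fst) (t := P) (fun x hx => ((Finset.mem_filter.mp hx).2).1)]
  apply Finset.sum_le_sum
  intro p hp
  rw [zRectsTop]
  apply Finset.card_le_card_of_injOn (fun t => (p, t))
  · intro t ht
    obtain ⟨htm, hzr⟩ := Finset.mem_filter.mp ht
    exact Finset.mem_filter.mpr
      ⟨Finset.mem_filter.mpr ⟨Finset.mem_product.mpr ⟨hzr.1, htm⟩, hzr⟩, rfl⟩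
  · intro a _ b _ hab
    exact congrArg Prod.snd hab

theorem zRects_ge_half_funnel (P : Finset (ℝ × ℝ))
    (hX : DistinctX P) (hY : DistinctY P) :
    (zRects P : ℤ) ≥ (Funnel P : ℤ) / 2 - 2 * P.card ∧
    ∀ p ∈ P, (zRectsTop P p : ℤ) ≥ (fContrib P p : ℤ) / 2 - 1 := by
  have hper : ∀ p ∈ P, fContrib P p ≤ 2 * zRectsTop P p + 3 := by
    intro p hp
    calc fContrib P p ≤ 2 * cnt (mix ((FL P p).image Prod.snd) ((FR P p).image Prod.snd)) + 3 :=
          blocks_le' _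
      _ ≤ 2 * zRectsTop P p + 3 := by
          have := cnt_le_zRectsTop P hX hY p hp
          omega
  constructor
  · have h1 : Funnel P ≤ 2 * zRects P + 3 * P.card := by
      rw [Funnel]
      calc ∑ p ∈ P, fContrib P p ≤ ∑ p ∈ P, (2 * zRectsTop P p + 3) :=
            Finset.sum_le_sum hper
        _ = 2 * (∑ p ∈ P, zRectsTop P p) + 3 * P.card := by
            rw [Finset.sum_add_distrib, ← Finset.mul_sum]
            congr 1
            simp [Finset.sum_const, mul_comm]
        _ ≤ 2 * zRects P + 3 * P.card := by
            have := sum_zRectsTop_le P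
            omega
    have h2 : (Funnel P : ℤ) ≤ 2 * zRects P + 3 * P.card := by exact_mod_cast h1
    omega
  · intro p hp
    have := hper p hp
    have h2 : (fContrib P p : ℤ) ≤ 2 * zRectsTop P p + 3 := by exact_mod_cast this
    omega
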